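/- arXiv:1811.06595 — 2 statements merged into one kernel-verified Lean document; each statement's English description precedes it below -/
import Mathlib

section
/- The function f(θ) = sin(θ) is concave on the interval (0, π); consequently, for positive angles θ_1,...,θ_n with each partial sum of k consecutive angles (cyclically) lying in (0, 2π), one has Σ_{i=1}^n log sin((θ_i + θ_{i+1} + ... + θ_{i+k-1})/2) ≤ n log sin(kπ/n), where indices are taken modulo n and θ_1 + ... + θ_n = 2π. -/
open Finset Real

lemma shift_sum (n j : ℕ) (hn : 0 < n) (θ : ℕ → ℝ) :
    ∑ i ∈ Finset.range n, θ ((i + j) % n) = ∑ i ∈ Finset.range n, θ i := by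
  have key : ∀ a, (a + j + (n - j % n)) % n = a % n := by
    intro a
    have hd := Nat.div_add_mod j n
    have hm : j % n < n := Nat.mod_lt _ hn
    have he : n * (j / n + 1) = n * (j / n) + n := by ring
    have : a + j + (n - j % n) = a + n * (j / n + 1) := by omega
    rw [this, Nat.add_mul_mod_self_left]
  apply Finset.sum_nbij' (i := fun i => (i + j) % n) (j := fun i => (i + (n - j % n)) % n)
  · intro a ha; exact Finset.mem_range.2 (Nat.mod_lt _ hn)
  · intro a ha; exact Finset.mem_range.2 (Nat.mod_lt _ hn)
  · intro a ha
    simp only [Finset.mem_range] at ha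
    rw [Nat.mod_add_mod, key, Nat.mod_eq_of_lt ha]
  · intro a ha
    simp only [Finset.mem_range] at ha
    rw [Nat.mod_add_mod, add_right_comm, key, Nat.mod_eq_of_lt ha]
  · intro a ha; rfl

/-- sin is concave on (0,π); consequently, for positive θ_1,...,θ_n summing to 2π
with every cyclic partial sum of k consecutive angles in (0, 2π), we have the
Jensen-type inequality
Σ_i log sin((θ_i + ... + θ_{i+k-1})/2) ≤ n log sin(kπ/n) (indices mod n). -/
theorem stmt1 (n k : ℕ) (hn : 2 ≤ n) (hk : 1 ≤ k) (hkn : 2 * k ≤ n)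
    (θ : ℕ → ℝ) (hθ : ∀ i < n, 0 < θ i)
    (hsum : ∑ i ∈ Finset.range n, θ i = 2 * Real.pi)
    (hcyc : ∀ i < n, (∑ j ∈ Finset.range k, θ ((i + j) % n)) ∈ Set.Ioo 0 (2 * Real.pi)) :
    ConcaveOn ℝ (Set.Ioo 0 Real.pi) Real.sin ∧
      ∑ i ∈ Finset.range n,
          Real.log (Real.sin ((∑ j ∈ Finset.range k, θ ((i + j) % n)) / 2))
        ≤ (n : ℝ) * Real.log (Real.sin ((k : ℝ) * Real.pi / n)) := by
  have hn0 : 0 < n := by omega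
  have hnR : (0 : ℝ) < n := by exact_mod_cast hn0
  have hπ := Real.pi_pos
  have hconc : ConcaveOn ℝ (Set.Ioo 0 Real.pi) Real.sin :=
    strictConcaveOn_sin_Icc.concaveOn.subset Set.Ioo_subset_Icc_self (convex_Ioo _ _)
  refine ⟨hconc, ?_⟩
  set s : ℕ → ℝ := fun i => ∑ j ∈ Finset.range k, θ ((i + j) % n) with hs
  have hmem : ∀ i ∈ Finset.range n, s i / 2 ∈ Set.Ioo 0 Real.pi := by
    intro i hi
    obtain ⟨h1, h2⟩ := hcyc i (Finset.mem_range.1 hi)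
    exact ⟨by linarith, by linarith⟩
  have hsin : ∀ i ∈ Finset.range n, 0 < Real.sin (s i / 2) := fun i hi =>
    Real.sin_pos_of_pos_of_lt_pi (hmem i hi).1 (hmem i hi).2
  have hstot : ∑ i ∈ Finset.range n, s i = (k : ℝ) * (2 * Real.pi) := by
    simp only [hs]
    rw [Finset.sum_comm]
    rw [Finset.sum_congr rfl fun j _ => shift_sum n j hn0 θ]
    rw [Finset.sum_congr rfl fun j _ => hsum, Finset.sum_const, Finset.card_range,
      nsmul_eq_mul]
  have hw0 : ∀ i ∈ Finset.range n, (0 : ℝ) ≤ 1 / n := fun i _ => by positivity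
  have hw1 : ∑ _i ∈ Finset.range n, (1 : ℝ) / n = 1 := by
    rw [Finset.sum_const, Finset.card_range, nsmul_eq_mul]
    field_simp
  -- Jensen for sin
  have hargs : ∑ i ∈ Finset.range n, (1 / (n : ℝ)) • (s i / 2) = (k : ℝ) * Real.pi / n := by
    simp only [smul_eq_mul]
    rw [← Finset.mul_sum, ← Finset.sum_div, hstot]
    field_simp
  have hJsin : ∑ i ∈ Finset.range n, (1 / (n : ℝ)) • Real.sin (s i / 2)
      ≤ Real.sin ((k : ℝ) * Real.pi / n) := by
    have := hconc.le_map_sum hw0 hw1 hmem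
    rwa [hargs] at this
  have hmean_pos : 0 < ∑ i ∈ Finset.range n, (1 / (n : ℝ)) • Real.sin (s i / 2) := by
    apply Finset.sum_pos
    · intro i hi
      have := hsin i hi
      simp only [smul_eq_mul]
      positivity
    · exact Finset.nonempty_range_iff.2 (by omega)
  -- Jensen for log
  have hlogconc : ConcaveOn ℝ (Set.Ioi 0) Real.log := strictConcaveOn_log_Ioi.concaveOn
  have hmem2 : ∀ i ∈ Finset.range n, Real.sin (s i / 2) ∈ Set.Ioi (0 : ℝ) := fun i hi =>
    hsin i hi
  have hJlog : ∑ i ∈ Finset.range n, (1 / (n : ℝ)) • Real.log (Real.sin (s i / 2))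
      ≤ Real.log (∑ i ∈ Finset.range n, (1 / (n : ℝ)) • Real.sin (s i / 2)) :=
    hlogconc.le_map_sum hw0 hw1 hmem2
  have hchain : ∑ i ∈ Finset.range n, (1 / (n : ℝ)) • Real.log (Real.sin (s i / 2))
      ≤ Real.log (Real.sin ((k : ℝ) * Real.pi / n)) :=
    hJlog.trans (Real.log_le_log hmean_pos hJsin)
  have := mul_le_mul_of_nonneg_left hchain (le_of_lt hnR)
  calc ∑ i ∈ Finset.range n, Real.log (Real.sin (s i / 2))
      = (n : ℝ) * ∑ i ∈ Finset.range n, (1 / (n : ℝ)) • Real.log (Real.sin (s i / 2)) := by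
        simp only [smul_eq_mul]
        rw [← Finset.mul_sum, ← mul_assoc]
        field_simp
    _ ≤ (n : ℝ) * Real.log (Real.sin ((k : ℝ) * Real.pi / n)) := this
end

section
/- Let α = 1 - r_1² - r_2² and β = 2 r_1 r_2 with r_1, r_2 ≥ 0. If the function θ ↦ Π_{k=0}^{n-1} (α + β cos(θ + 2kπ/n)) is constant in θ (for n ≥ 1), then β = 0, i.e. r_1 = 0 or r_2 = 0. -/
open Complex Finset

lemma prod_sub_root (n : ℕ) (hn : 0 < n) (x y : ℂ) :
    ∏ k ∈ Finset.range n, (x - Complex.exp (2 * Real.pi * Complex.I / n) ^ k * y)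
      = x ^ n - y ^ n := by
  haveI : NeZero n := NeZero.of_pos hn
  have hζ := Complex.isPrimitiveRoot_exp n hn.ne'
  have h2 := hζ.pow_sub_pow_eq_prod_sub_mul x y hn
  rw [h2]
  refine Finset.prod_bij (fun (k : ℕ) (_ : k ∈ Finset.range n) =>
      Complex.exp (2 * Real.pi * Complex.I / n) ^ k) ?_ ?_ ?_ ?_
  · intro k hk
    rw [Polynomial.mem_nthRootsFinset hn, ← pow_mul, mul_comm k n, pow_mul, hζ.pow_eq_one,
      one_pow]
  · intro a ha b hb h
    exact hζ.pow_inj (Finset.mem_range.mp ha) (Finset.mem_range.mp hb) h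
  · intro μ hμ
    obtain ⟨i, hi, hiμ⟩ := hζ.eq_pow_of_pow_eq_one ((Polynomial.mem_nthRootsFinset hn 1).mp hμ)
    exact ⟨i, Finset.mem_range.mpr hi, hiμ⟩
  · intro k hk; rfl

lemma key_formula (n : ℕ) (hn : 1 ≤ n) (A B : ℝ) (ρ ρ' : ℂ)
    (hprod : ρ * ρ' = 1) (hsum : (B : ℂ) * (ρ + ρ') = -2 * (A : ℂ)) (θ : ℝ) :
    ((∏ k ∈ Finset.range n,
        (A + B * Real.cos (θ + 2 * (k : ℝ) * Real.pi / n)) : ℝ) : ℂ)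
      = ((B : ℂ) / 2) ^ n * (-1) ^ (n - 1) *
        (Complex.exp ((n : ℂ) * θ * Complex.I) + (Complex.exp ((n : ℂ) * θ * Complex.I))⁻¹
          - (ρ ^ n + ρ' ^ n)) := by
  have hn0 : 0 < n := hn
  have hnC : (n : ℂ) ≠ 0 := Nat.cast_ne_zero.mpr hn0.ne'
  set ζ : ℂ := Complex.exp (2 * Real.pi * Complex.I / n) with hζdef
  set w : ℂ := Complex.exp ((θ : ℂ) * Complex.I) with hwdef
  have hw0 : w ≠ 0 := Complex.exp_ne_zero _
  have hζ0 : ζ ≠ 0 := Complex.exp_ne_zero _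
  have hwk : ∀ k : ℕ, Complex.exp (((θ : ℂ) + 2 * (k : ℂ) * (Real.pi : ℂ) / (n : ℂ)) * Complex.I)
      = w * ζ ^ k := by
    intro k
    rw [hwdef, hζdef, ← Complex.exp_nat_mul, ← Complex.exp_add]
    congr 1
    ring
  have hfac : ∀ k ∈ Finset.range n,
      ((A + B * Real.cos (θ + 2 * (k : ℝ) * Real.pi / n) : ℝ) : ℂ)
        = (B : ℂ) / 2 * (w * ζ ^ k)⁻¹ * ((w * ζ ^ k - ρ) * (w * ζ ^ k - ρ')) := by
    intro k _
    have hwζ : w * ζ ^ k ≠ 0 := mul_ne_zero hw0 (pow_ne_zero _ hζ0)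
    have harg : ((θ + 2 * (k : ℝ) * Real.pi / n : ℝ) : ℂ)
        = (θ : ℂ) + 2 * (k : ℂ) * (Real.pi : ℂ) / (n : ℂ) := by push_cast; ring
    have h2c := Complex.two_cos ((θ : ℂ) + 2 * (k : ℂ) * (Real.pi : ℂ) / (n : ℂ))
    rw [show (-((θ : ℂ) + 2 * (k : ℂ) * (Real.pi : ℂ) / (n : ℂ)) * Complex.I)
        = -(((θ : ℂ) + 2 * (k : ℂ) * (Real.pi : ℂ) / (n : ℂ)) * Complex.I) by ring,
      Complex.exp_neg, hwk k] at h2c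
    push_cast
    field_simp at h2c ⊢
    linear_combination (B : ℂ) * h2c + (w * ζ ^ k) * hsum - (B : ℂ) * hprod
  rw [Complex.ofReal_prod, Finset.prod_congr rfl hfac]
  have hP1 : ∀ r : ℂ, ∏ k ∈ Finset.range n, (w * ζ ^ k - r)
      = (-1 : ℂ) ^ (n - 1) * (-1) * (r ^ n - w ^ n) := by
    intro r
    have e : ∀ k ∈ Finset.range n, w * ζ ^ k - r = (-1) * (r - ζ ^ k * w) := fun k _ => by ring
    rw [Finset.prod_congr rfl e, Finset.prod_mul_distrib, Finset.prod_const, Finset.card_range,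
      hζdef, prod_sub_root n hn0 r w]
    have : ((-1 : ℂ)) ^ n = (-1 : ℂ) ^ (n - 1) * (-1) := by
      conv_lhs => rw [← Nat.sub_add_cancel hn]
      rw [pow_succ]
    rw [this]
  have hPw : ∏ k ∈ Finset.range n, (w * ζ ^ k) = (-1 : ℂ) ^ (n - 1) * w ^ n := by
    rw [Finset.prod_mul_distrib, Finset.prod_const, Finset.card_range,
      Finset.prod_pow_eq_pow_sum]
    have hm : ((∑ k ∈ Finset.range n, k : ℕ) : ℂ) * 2 = (n : ℂ) * ((n - 1 : ℕ) : ℂ) := by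
      exact_mod_cast congrArg (Nat.cast (R := ℂ)) (Finset.sum_range_id_mul_two n)
    have hm' : (∑ k ∈ Finset.range n, (k : ℂ)) * 2 = (n : ℂ) * ((n : ℂ) - 1) := by
      push_cast [Nat.cast_sub hn] at hm
      exact hm
    have hz : ζ ^ (∑ k ∈ Finset.range n, k) = (-1 : ℂ) ^ (n - 1) := by
      rw [hζdef, ← Complex.exp_nat_mul, ← Complex.exp_pi_mul_I, ← Complex.exp_nat_mul]
      congr 1
      push_cast [Nat.cast_sub hn]
      field_simp
      linear_combination hm' 
    rw [hz]
    ring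
  have hW : Complex.exp ((n : ℂ) * θ * Complex.I) = w ^ n := by
    rw [hwdef, ← Complex.exp_nat_mul]
    congr 1
    ring
  have e2 : ∀ k ∈ Finset.range n,
      (B : ℂ) / 2 * (w * ζ ^ k)⁻¹ * ((w * ζ ^ k - ρ) * (w * ζ ^ k - ρ'))
        = ((B : ℂ) / 2 * (w * ζ ^ k)⁻¹) * ((w * ζ ^ k - ρ) * (w * ζ ^ k - ρ')) :=
    fun k _ => by ring
  rw [Finset.prod_congr rfl e2, Finset.prod_mul_distrib, Finset.prod_mul_distrib,
    Finset.prod_mul_distrib, Finset.prod_const, Finset.card_range, Finset.prod_inv_distrib,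
    hPw, hP1 ρ, hP1 ρ', hW]
  have hE : (-1 : ℂ) ^ (n - 1) * (-1 : ℂ) ^ (n - 1) = 1 := by
    rw [← pow_add, ← two_mul, pow_mul]
    norm_num
  have hpn : ρ ^ n * ρ' ^ n = 1 := by rw [← mul_pow, hprod, one_pow]
  have hWne : w ^ n ≠ 0 := pow_ne_zero _ hw0
  have hEne : ((-1 : ℂ)) ^ (n - 1) ≠ 0 := pow_ne_zero _ (by norm_num)
  set E : ℂ := (-1 : ℂ) ^ (n - 1)
  set W : ℂ := w ^ n
  set P : ℂ := ρ ^ n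
  set Q : ℂ := ρ' ^ n
  set Bc : ℂ := ((B : ℂ) / 2) ^ n
  field_simp
  linear_combination (B : ℂ) ^ n * (1 / 2 : ℂ) ^ n * (hpn : ρ ^ n * ρ' ^ n = 1)


/-- If the trigonometric product θ ↦ Π_{k<n} (α + β cos(θ + 2kπ/n)), with
α = 1 - r₁² - r₂², β = 2 r₁ r₂ and r₁, r₂ ≥ 0, is constant in θ, then
r₁ = 0 or r₂ = 0. -/
theorem stmt3 (n : ℕ) (hn : 1 ≤ n) (r1 r2 : ℝ) (h1 : 0 ≤ r1) (h2 : 0 ≤ r2)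
    (hconst : ∀ θ₁ θ₂ : ℝ,
      (∏ k ∈ Finset.range n,
        ((1 - r1 ^ 2 - r2 ^ 2) + 2 * r1 * r2 * Real.cos (θ₁ + 2 * (k : ℝ) * Real.pi / n))) =
      ∏ k ∈ Finset.range n,
        ((1 - r1 ^ 2 - r2 ^ 2) + 2 * r1 * r2 * Real.cos (θ₂ + 2 * (k : ℝ) * Real.pi / n))) :
    r1 = 0 ∨ r2 = 0 := by
  by_contra hcon
  push_neg at hcon
  obtain ⟨hr1, hr2⟩ := hcon
  set A : ℝ := 1 - r1 ^ 2 - r2 ^ 2 with hAdef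
  set B : ℝ := 2 * r1 * r2 with hBdef
  have hB : B ≠ 0 := by
    simp only [hBdef]
    positivity
  have hBC : (B : ℂ) ≠ 0 := Complex.ofReal_ne_zero.mpr hB
  obtain ⟨s, hs⟩ := IsAlgClosed.exists_pow_nat_eq ((A : ℂ) ^ 2 - (B : ℂ) ^ 2) two_pos
  set ρ : ℂ := (-(A : ℂ) + s) / (B : ℂ) with hρdef
  set ρ' : ℂ := (-(A : ℂ) - s) / (B : ℂ) with hρ'def
  have hprod : ρ * ρ' = 1 := by
    rw [hρdef, hρ'def]
    field_simp
    linear_combination -hs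
  have hsum : (B : ℂ) * (ρ + ρ') = -2 * (A : ℂ) := by
    rw [hρdef, hρ'def]
    field_simp
    ring
  have h0 := key_formula n hn A B ρ ρ' hprod hsum 0
  have hπ := key_formula n hn A B ρ ρ' hprod hsum (Real.pi / n)
  have hc : ((∏ k ∈ Finset.range n,
        (A + B * Real.cos ((0 : ℝ) + 2 * (k : ℝ) * Real.pi / n)) : ℝ) : ℂ)
      = ((∏ k ∈ Finset.range n,
        (A + B * Real.cos ((Real.pi / n : ℝ) + 2 * (k : ℝ) * Real.pi / n)) : ℝ) : ℂ) := by
    exact_mod_cast congrArg (fun x : ℝ => (x : ℂ)) (hconst 0 (Real.pi / n))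
  rw [h0, hπ] at hc
  have hnC : (n : ℂ) ≠ 0 := Nat.cast_ne_zero.mpr (by omega)
  have e0 : Complex.exp ((n : ℂ) * ((0 : ℝ) : ℂ) * Complex.I) = 1 := by
    norm_num
  have eπ : Complex.exp ((n : ℂ) * ((Real.pi / n : ℝ) : ℂ) * Complex.I) = -1 := by
    push_cast
    rw [show (n : ℂ) * ((Real.pi : ℂ) / (n : ℂ)) * Complex.I = (Real.pi : ℂ) * Complex.I by
      field_simp]
    exact Complex.exp_pi_mul_I
  rw [e0, eπ] at hc
  norm_num at hc
  exact hB hc.1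
end
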